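/- For all integers k ≥ 1 and t ≥ 1 there exists a constant c = c(k, t) such that every connected bipartite permutation graph containing no induced path on k vertices and no induced copy of the chain graph Z_t has neighbourhood diversity at most c. -/

import Mathlib

open SimpleGraph

/-- `H` is an induced subgraph of `G`. -/
def IndSub {W V : Type*} (H : SimpleGraph W) (G : SimpleGraph V) : Prop :=
  Nonempty (H ↪g G)

/-- A bipartite permutation graph is a letter graph with the path decoder
over some finite alphabet. -/
def IsBPG {V : Type*} [Fintype V] (G : SimpleGraph V) : Prop :=
  ∃ (k : ℕ) (v : Fin (Fintype.card V) ≃ V) (w : Fin (Fintype.card V) → Fin k),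
    ∀ i j : Fin (Fintype.card V), i < j →
      (G.Adj (v i) (v j) ↔ (w j : ℕ) = (w i : ℕ) + 1)

/-- The chain graph `Z_n`: parts `a_1, …, a_n` (left) and `b_1, …, b_n` (right),
with `a_i` adjacent to `b_j` iff `i ≤ j`. -/
def Zgraph (n : ℕ) : SimpleGraph (Fin n ⊕ Fin n) :=
  SimpleGraph.fromRel (fun x y => ∃ i j : Fin n, x = Sum.inl i ∧ y = Sum.inr j ∧ i ≤ j)

/-- Two vertices are similar if no third vertex distinguishes them. -/
def SimilarVert {V : Type*} (G : SimpleGraph V) (x y : V) : Prop :=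
  ∀ z, z ≠ x → z ≠ y → (G.Adj z x ↔ G.Adj z y)

/-- The neighbourhood diversity of `G`: the number of similarity classes. -/
noncomputable def nd {V : Type*} (G : SimpleGraph V) : ℕ :=
  {S : Set V | ∃ x, S = {y | SimilarVert G x y}}.ncard

lemma similar_symm {V : Type*} {G : SimpleGraph V} {x y : V} (h : SimilarVert G x y) :
    SimilarVert G y x := fun z hzy hzx => (h z hzx hzy).symm

lemma similar_trans {V : Type*} {G : SimpleGraph V} {x y z : V}
    (h1 : SimilarVert G x y) (h2 : SimilarVert G y z) : SimilarVert G x z := by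
  intro u hux huz
  by_cases huy : u = y
  · subst huy
    by_cases hxz : x = z
    · subst hxz; rfl
    · have e1 : G.Adj x u ↔ G.Adj x z := h2 x (Ne.symm hux) hxz
      have e2 : G.Adj z x ↔ G.Adj z u := h1 z (fun h => hxz h.symm) (Ne.symm huz)
      rw [G.adj_comm u x, e1, G.adj_comm x z, e2]
      exact G.adj_comm z u
  · exact (h1 u hux huy).trans (h2 u huy huz)

lemma similar_of_nbhd_eq {V : Type*} {G : SimpleGraph V} {x y : V}
    (h : G.neighborSet x = G.neighborSet y) : SimilarVert G x y := by
  intro z _ _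
  have : z ∈ G.neighborSet x ↔ z ∈ G.neighborSet y := by rw [h]
  simpa [mem_neighborSet, G.adj_comm] using this

lemma simclass_eq_of_similar {V : Type*} {G : SimpleGraph V} {x y : V}
    (h : SimilarVert G x y) : {z | SimilarVert G x z} = {z | SimilarVert G y z} := by
  ext z
  exact ⟨fun hz => similar_trans (similar_symm h) hz, fun hz => similar_trans h hz⟩

lemma nd_le_range {W : Type*} [Fintype W] {β : Type*} (G : SimpleGraph W) (f : W → β)
    (hf : ∀ x y, f x = f y → G.neighborSet x = G.neighborSet y) :
    nd G ≤ (Set.range f).ncard := by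
  classical
  have hle : nd G ≤ (Set.range (fun x => some (f x) : W → Option β)).ncard := by
    apply Set.ncard_le_ncard_of_injOn
      (fun S => if h : ∃ x, S = {y | SimilarVert G x y} then some (f h.choose) else none)
    · rintro S hS
      have h1 : ∃ x, S = {y | SimilarVert G x y} := hS
      rw [dif_pos h1]
      exact ⟨h1.choose, rfl⟩
    · rintro S hS S' hS' hEq
      have h1 : ∃ x, S = {y | SimilarVert G x y} := hS
      have h2 : ∃ x, S' = {y | SimilarVert G x y} := hS'
      dsimp only at hEq
      rw [dif_pos h1, dif_pos h2] at hEq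
      have : f h1.choose = f h2.choose := by simpa using hEq
      have hsim : SimilarVert G h1.choose h2.choose := similar_of_nbhd_eq (hf _ _ this)
      rw [h1.choose_spec, h2.choose_spec, simclass_eq_of_similar hsim]
  calc nd G ≤ _ := hle
    _ = (Set.range f).ncard := by
        have : (Set.range (fun x => some (f x) : W → Option β)) = some '' Set.range f := by
          rw [← Set.range_comp]; rfl
        rw [this, Set.ncard_image_of_injective _ (Option.some_injective β)]

lemma dist_start_getVert_le {W : Type*} {G : SimpleGraph W} (hconn : G.Connected)
    {x y : W} (p : G.Walk x y) : ∀ i : ℕ, G.dist x (p.getVert i) ≤ i := by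
  induction p with
  | nil => intro i; simp [SimpleGraph.Walk.getVert, SimpleGraph.dist_self]
  | @cons u b y h q ih =>
    intro i
    cases i with
    | zero => simp
    | succ n =>
      rw [SimpleGraph.Walk.getVert_cons_succ]
      calc G.dist u (q.getVert n) ≤ G.dist u b + G.dist b (q.getVert n) := hconn.dist_triangle
        _ ≤ 1 + n := Nat.add_le_add (SimpleGraph.dist_le h.toWalk) (ih n)
        _ = n + 1 := Nat.add_comm 1 n

lemma dist_getVert_end_le {W : Type*} {G : SimpleGraph W}
    {x y : W} (p : G.Walk x y) : ∀ i : ℕ, G.dist (p.getVert i) y ≤ p.length - i := by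
  induction p with
  | nil => intro i; simp [SimpleGraph.Walk.getVert]
  | @cons u b y h q ih =>
    intro i
    cases i with
    | zero =>
      simpa using SimpleGraph.dist_le (SimpleGraph.Walk.cons h q)
    | succ n =>
      rw [SimpleGraph.Walk.getVert_cons_succ]
      simpa using ih n

lemma indsub_path_of_dist {W : Type*} {G : SimpleGraph W} (hconn : G.Connected) (k : ℕ)
    {x y : W} (hd : k ≤ G.dist x y + 1) : IndSub (SimpleGraph.pathGraph k) G := by
  obtain ⟨p, hp⟩ := hconn.exists_walk_length_eq_dist x y
  have hL : ∀ i : ℕ, i ≤ p.length → G.dist x (p.getVert i) = i := by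
    intro i hi
    refine le_antisymm (dist_start_getVert_le hconn p i) ?_
    have h1 := dist_getVert_end_le p i
    have h2 : G.dist x y ≤ G.dist x (p.getVert i) + G.dist (p.getVert i) y := hconn.dist_triangle
    omega
  have hik : ∀ i : Fin k, (i : ℕ) ≤ p.length := by
    intro i; have := i.isLt; omega
  refine ⟨⟨⟨fun i => p.getVert i, ?_⟩, ?_⟩⟩
  · intro i j hij
    dsimp only at hij
    have : (i : ℕ) = (j : ℕ) := by
      rw [← hL i (hik i), ← hL j (hik j), hij]
    exact Fin.ext this
  · intro i j
    rw [SimpleGraph.pathGraph_adj]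
    constructor
    · intro hadj
      by_contra hne
      push_neg at hne
      obtain ⟨hne1, hne2⟩ := hne
      have hij : (i : ℕ) ≠ (j : ℕ) := by
        intro hEq
        exact G.ne_of_adj hadj (by rw [Fin.ext hEq])
      rcases Nat.lt_or_ge (i : ℕ) (j : ℕ) with hlt | hge
      · have hij2 : (i : ℕ) + 2 ≤ (j : ℕ) := by omega
        have c1 : G.dist x y ≤ G.dist x (p.getVert i) + G.dist (p.getVert i) y :=
          hconn.dist_triangle
        have c2 : G.dist (p.getVert i) y ≤ G.dist (p.getVert i) (p.getVert j)
            + G.dist (p.getVert j) y := hconn.dist_triangle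
        have c3 : G.dist (p.getVert i) (p.getVert j) ≤ 1 := SimpleGraph.dist_le hadj.toWalk
        have c4 := dist_getVert_end_le p (j : ℕ)
        have c5 := hL i (hik i)
        have := hik j
        omega
      · have hij2 : (j : ℕ) + 2 ≤ (i : ℕ) := by omega
        have hadj' := hadj.symm
        have c1 : G.dist x y ≤ G.dist x (p.getVert j) + G.dist (p.getVert j) y :=
          hconn.dist_triangle
        have c2 : G.dist (p.getVert j) y ≤ G.dist (p.getVert j) (p.getVert i)
            + G.dist (p.getVert i) y := hconn.dist_triangle
        have c3 : G.dist (p.getVert j) (p.getVert i) ≤ 1 := SimpleGraph.dist_le hadj'.toWalk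
        have c4 := dist_getVert_end_le p (i : ℕ)
        have c5 := hL j (hik j)
        have := hik i
        omega
    · rintro (h | h)
      · have hlt : (i : ℕ) < p.length := by have := j.isLt; omega
        have := p.adj_getVert_succ hlt
        rwa [show (i : ℕ) + 1 = (j : ℕ) from h] at this
      · have hlt : (j : ℕ) < p.length := by have := i.isLt; omega
        have := (p.adj_getVert_succ hlt).symm
        rwa [show (j : ℕ) + 1 = (i : ℕ) from h] at this

lemma zgraph_adj_inl_inr (t : ℕ) (p q : Fin t) :
    (Zgraph t).Adj (Sum.inl p) (Sum.inr q) ↔ p ≤ q := by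
  rw [Zgraph, SimpleGraph.fromRel_adj]
  constructor
  · rintro ⟨-, ⟨i, j, hi, hj, hle⟩ | ⟨i, j, hi, hj, hle⟩⟩
    · cases hi; cases hj; exact hle
    · cases hi
  · intro h
    exact ⟨by simp, Or.inl ⟨p, q, rfl, rfl, h⟩⟩

lemma zgraph_not_adj_inl (t : ℕ) (p q : Fin t) : ¬ (Zgraph t).Adj (Sum.inl p) (Sum.inl q) := by
  rw [Zgraph, SimpleGraph.fromRel_adj]
  rintro ⟨-, ⟨i, j, hi, hj, -⟩ | ⟨i, j, hi, hj, -⟩⟩ <;> cases hj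

lemma zgraph_not_adj_inr (t : ℕ) (p q : Fin t) : ¬ (Zgraph t).Adj (Sum.inr p) (Sum.inr q) := by
  rw [Zgraph, SimpleGraph.fromRel_adj]
  rintro ⟨-, ⟨i, j, hi, hj, -⟩ | ⟨i, j, hi, hj, -⟩⟩ <;> cases hi

lemma zt_embed {W : Type*} (G : SimpleGraph W) (t : ℕ) (a b : Fin t → W)
    (ha : Function.Injective a) (hb : Function.Injective b)
    (hab : ∀ p q, a p ≠ b q)
    (haa : ∀ p q, ¬ G.Adj (a p) (a q)) (hbb : ∀ p q, ¬ G.Adj (b p) (b q))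
    (hadj : ∀ p q, G.Adj (a p) (b q) ↔ p ≤ q) :
    IndSub (Zgraph t) G := by
  refine ⟨⟨⟨Sum.elim a b, @id (Function.Injective (Sum.elim a b)) ?_⟩, ?_⟩⟩
  · rintro (p | p) (q | q) h <;> simp only [Sum.elim_inl, Sum.elim_inr] at h
    · rw [ha.eq_iff.mp h]
    · exact absurd h (hab p q)
    · exact absurd h.symm (hab q p)
    · rw [hb.eq_iff.mp h]
  · rintro (p | p) (q | q) <;>
      simp only [Function.Embedding.coeFn_mk, Sum.elim_inl, Sum.elim_inr]
    · constructor
      · intro h; exact absurd h (haa p q)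
      · intro h; exact absurd h (zgraph_not_adj_inl t p q)
    · rw [hadj p q, zgraph_adj_inl_inr]
    · rw [G.adj_comm, hadj q p, SimpleGraph.adj_comm, zgraph_adj_inl_inr]
    · constructor
      · intro h; exact absurd h (hbb p q)
      · intro h; exact absurd h (zgraph_not_adj_inr t p q)

lemma zfree_R {W : Type*} {G : SimpleGraph W} {N : ℕ} (v : Fin N ≃ W) (wv : Fin N → ℕ)
    (adjChar : ∀ i j : Fin N, G.Adj (v i) (v j) ↔
      ((i < j ∧ wv j = wv i + 1) ∨ (j < i ∧ wv i = wv j + 1)))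
    (t : ℕ) (hZt : ¬ IndSub (Zgraph t) G) (a : ℕ) :
    ((Finset.univ.filter (fun i => wv i = a)).image
      (fun i => (Finset.univ.filter (fun j => i < j ∧ wv j = a + 1)).card)).card ≤ t := by
  classical
  set Xa := Finset.univ.filter (fun i => wv i = a) with hXa
  set FR : Fin N → Finset (Fin N) :=
    fun i => Finset.univ.filter (fun j => i < j ∧ wv j = a + 1) with hFR
  by_contra hcon
  push_neg at hcon
  obtain ⟨V', hV'sub, hV'card⟩ := Finset.exists_subset_card_eq hcon
  set e := V'.orderEmbOfFin hV'card with he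
  have hex : ∀ q : Fin (t + 1), ∃ i, i ∈ Xa ∧ (FR i).card = e q := by
    intro q
    have := hV'sub (V'.orderEmbOfFin_mem hV'card q)
    simpa [Finset.mem_image] using this
  choose x0 hx0mem hx0val using hex
  have hanti : ∀ i i' : Fin N, i ≤ i' → (FR i').card ≤ (FR i).card := by
    intro i i' hle
    apply Finset.card_le_card
    intro j hj
    simp only [hFR, Finset.mem_filter, Finset.mem_univ, true_and] at hj ⊢
    exact ⟨lt_of_le_of_lt hle hj.1, hj.2⟩
  set x : Fin (t + 1) → Fin N := fun q => x0 q.rev with hx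
  have hxa : ∀ q, wv (x q) = a := by
    intro q
    have := hx0mem q.rev
    simpa [hXa, Finset.mem_filter] using this
  have hxmono : StrictMono x := by
    intro q q' hqq
    have hrev : q'.rev < q.rev := Fin.rev_lt_rev.mpr hqq
    have hval : (FR (x q')).card < (FR (x q)).card := by
      rw [hx]; dsimp only
      rw [hx0val q.rev, hx0val q'.rev]
      exact e.strictMono hrev
    by_contra hle
    push_neg at hle
    exact absurd (hanti _ _ hle) (not_le.mpr hval)
  have hy : ∀ q : Fin t, ∃ y, x q.castSucc < y ∧ y < x q.succ ∧ wv y = a + 1 := by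
    intro q
    have hcardlt : (FR (x q.succ)).card < (FR (x q.castSucc)).card := by
      rw [hx]; dsimp only
      rw [hx0val q.succ.rev, hx0val q.castSucc.rev]
      exact e.strictMono (Fin.rev_lt_rev.mpr (Fin.castSucc_lt_succ (i := q)))
    have hnsub : ¬ FR (x q.castSucc) ⊆ FR (x q.succ) := by
      intro hsub
      exact absurd (Finset.card_le_card hsub) (not_le.mpr hcardlt)
    rw [Finset.not_subset] at hnsub
    obtain ⟨y, hy1, hy2⟩ := hnsub
    simp only [hFR, Finset.mem_filter, Finset.mem_univ, true_and, not_and] at hy1 hy2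
    refine ⟨y, hy1.1, ?_, hy1.2⟩
    have hne : y ≠ x q.succ := by
      intro hEq
      have := hxa q.succ
      rw [← hEq, hy1.2] at this
      omega
    have : ¬ x q.succ < y := fun hlt => hy2 hlt hy1.2
    exact lt_of_le_of_ne (not_lt.mp this) hne
  choose yf hyf1 hyf2 hyf3 using hy
  apply hZt
  apply zt_embed G t (fun p => v (x p.castSucc)) (fun q => v (yf q))
  · intro p q hpq
    have := v.injective hpq
    have h2 := hxmono.injective this
    exact Fin.castSucc_injective t h2
  · have hyfmono : StrictMono yf := by
      intro q q' hqq
      calc yf q < x q.succ := hyf2 q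
        _ ≤ x q'.castSucc := hxmono.monotone (by
            rw [Fin.le_def]
            simp only [Fin.val_succ, Fin.coe_castSucc]
            omega)
        _ < yf q' := hyf1 q'
    exact fun p q h => hyfmono.injective (v.injective h)
  · intro p q hEq
    have := v.injective hEq
    have h1 := hxa p.castSucc
    have h2 := hyf3 q
    rw [this] at h1
    omega
  · intro p q hadj
    rw [adjChar] at hadj
    have h1 := hxa p.castSucc
    have h2 := hxa q.castSucc
    rcases hadj with ⟨-, h⟩ | ⟨-, h⟩ <;> omega
  · intro p q hadj
    rw [adjChar] at hadj
    have h1 := hyf3 p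
    have h2 := hyf3 q
    rcases hadj with ⟨-, h⟩ | ⟨-, h⟩ <;> omega
  · intro p q
    rw [adjChar]
    have h1 := hxa p.castSucc
    have h2 := hyf3 q
    constructor
    · rintro (⟨hlt, -⟩ | ⟨-, habs⟩)
      · by_contra hnpq
        push_neg at hnpq
        have : yf q < x p.castSucc :=
          lt_of_lt_of_le (hyf2 q) (hxmono.monotone (by
            rw [Fin.le_def]
            simp only [Fin.val_succ, Fin.coe_castSucc]
            omega))
        exact absurd hlt (not_lt.mpr this.le)
      · omega
    · intro hpq
      left
      refine ⟨lt_of_le_of_lt (hxmono.monotone (Fin.castSucc_le_castSucc_iff.mpr hpq)) (hyf1 q), by omega⟩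

lemma zfree_L {W : Type*} {G : SimpleGraph W} {N : ℕ} (v : Fin N ≃ W) (wv : Fin N → ℕ)
    (adjChar : ∀ i j : Fin N, G.Adj (v i) (v j) ↔
      ((i < j ∧ wv j = wv i + 1) ∨ (j < i ∧ wv i = wv j + 1)))
    (t : ℕ) (hZt : ¬ IndSub (Zgraph t) G) (a : ℕ) :
    ((Finset.univ.filter (fun i => wv i = a)).image
      (fun i => (Finset.univ.filter (fun j => j < i ∧ a = wv j + 1)).card)).card ≤ t := by
  classical
  set Xa := Finset.univ.filter (fun i => wv i = a) with hXa
  set FL : Fin N → Finset (Fin N) :=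
    fun i => Finset.univ.filter (fun j => j < i ∧ a = wv j + 1) with hFL
  by_contra hcon
  push_neg at hcon
  obtain ⟨V', hV'sub, hV'card⟩ := Finset.exists_subset_card_eq hcon
  set e := V'.orderEmbOfFin hV'card with he
  have hex : ∀ q : Fin (t + 1), ∃ i, i ∈ Xa ∧ (FL i).card = e q := by
    intro q
    have := hV'sub (V'.orderEmbOfFin_mem hV'card q)
    simpa [Finset.mem_image] using this
  choose x hx0mem hx0val using hex
  have hmono : ∀ i i' : Fin N, i ≤ i' → (FL i).card ≤ (FL i').card := by
    intro i i' hle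
    apply Finset.card_le_card
    intro j hj
    simp only [hFL, Finset.mem_filter, Finset.mem_univ, true_and] at hj ⊢
    exact ⟨lt_of_lt_of_le hj.1 hle, hj.2⟩
  have hxa : ∀ q, wv (x q) = a := by
    intro q
    have := hx0mem q
    simpa [hXa, Finset.mem_filter] using this
  have hxmono : StrictMono x := by
    intro q q' hqq
    have hval : (FL (x q)).card < (FL (x q')).card := by
      rw [hx0val q, hx0val q']
      exact e.strictMono hqq
    by_contra hle
    push_neg at hle
    exact absurd (hmono _ _ hle) (not_le.mpr hval)
  have hy : ∀ q : Fin t, ∃ z, x q.castSucc < z ∧ z < x q.succ ∧ a = wv z + 1 := by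
    intro q
    have hcardlt : (FL (x q.castSucc)).card < (FL (x q.succ)).card := by
      rw [hx0val q.castSucc, hx0val q.succ]
      exact e.strictMono (Fin.castSucc_lt_succ (i := q))
    have hnsub : ¬ FL (x q.succ) ⊆ FL (x q.castSucc) := by
      intro hsub
      exact absurd (Finset.card_le_card hsub) (not_le.mpr hcardlt)
    rw [Finset.not_subset] at hnsub
    obtain ⟨z, hz1, hz2⟩ := hnsub
    simp only [hFL, Finset.mem_filter, Finset.mem_univ, true_and, not_and] at hz1 hz2
    refine ⟨z, ?_, hz1.1, hz1.2⟩
    have hne : z ≠ x q.castSucc := by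
      intro hEq
      have := hxa q.castSucc
      rw [← hEq] at this
      omega
    have : ¬ z < x q.castSucc := fun hlt => hz2 hlt hz1.2
    exact lt_of_le_of_ne (not_lt.mp this) (Ne.symm hne)
  choose zf hzf1 hzf2 hzf3 using hy
  apply hZt
  apply zt_embed G t (fun p => v (zf p)) (fun q => v (x q.succ))
  · have hzfmono : StrictMono zf := by
      intro q q' hqq
      calc zf q < x q.succ := hzf2 q
        _ ≤ x q'.castSucc := hxmono.monotone (by
            rw [Fin.le_def]
            simp only [Fin.val_succ, Fin.coe_castSucc]
            omega)
        _ < zf q' := hzf1 q'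
    exact fun p q h => hzfmono.injective (v.injective h)
  · intro p q hpq
    have := v.injective hpq
    have h2 := hxmono.injective this
    exact Fin.succ_injective t h2
  · intro p q hEq
    have := v.injective hEq
    have h1 := hzf3 p
    have h2 := hxa q.succ
    rw [this] at h1
    omega
  · intro p q hadj
    rw [adjChar] at hadj
    have h1 := hzf3 p
    have h2 := hzf3 q
    rcases hadj with ⟨-, h⟩ | ⟨-, h⟩ <;> omega
  · intro p q hadj
    rw [adjChar] at hadj
    have h1 := hxa p.succ
    have h2 := hxa q.succ
    rcases hadj with ⟨-, h⟩ | ⟨-, h⟩ <;> omega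
  · intro p q
    rw [adjChar]
    have h1 := hzf3 p
    have h2 := hxa q.succ
    constructor
    · rintro (⟨hlt, -⟩ | ⟨-, habs⟩)
      · by_contra hnpq
        push_neg at hnpq
        have : x q.succ ≤ x p.castSucc := hxmono.monotone (by
            rw [Fin.le_def]
            simp only [Fin.val_succ, Fin.coe_castSucc]
            omega)
        exact absurd hlt (not_lt.mpr (this.trans (hzf1 p).le))
      · omega
    · intro hpq
      left
      refine ⟨lt_of_lt_of_le (hzf2 p) (hxmono.monotone (Fin.succ_le_succ_iff.mpr hpq)), by omega⟩

lemma nbhd_eq_of_counts {W : Type*} {G : SimpleGraph W} {N : ℕ} (v : Fin N ≃ W) (wv : Fin N → ℕ)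
    (adjChar : ∀ i j : Fin N, G.Adj (v i) (v j) ↔
      ((i < j ∧ wv j = wv i + 1) ∨ (j < i ∧ wv i = wv j + 1)))
    (i i' : Fin N) (hle : i ≤ i') (h1 : wv i = wv i')
    (h2 : (Finset.univ.filter (fun j => i < j ∧ wv j = wv i + 1)).card
        = (Finset.univ.filter (fun j => i' < j ∧ wv j = wv i' + 1)).card)
    (h3 : (Finset.univ.filter (fun j => j < i ∧ wv i = wv j + 1)).card
        = (Finset.univ.filter (fun j => j < i' ∧ wv i' = wv j + 1)).card) :
    G.neighborSet (v i) = G.neighborSet (v i') := by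
  classical
  have hRsub : Finset.univ.filter (fun j => i' < j ∧ wv j = wv i' + 1)
      ⊆ Finset.univ.filter (fun j => i < j ∧ wv j = wv i + 1) := by
    intro j hj
    simp only [Finset.mem_filter, Finset.mem_univ, true_and] at hj ⊢
    exact ⟨lt_of_le_of_lt hle hj.1, by rw [h1]; exact hj.2⟩
  have hR : Finset.univ.filter (fun j => i' < j ∧ wv j = wv i' + 1)
      = Finset.univ.filter (fun j => i < j ∧ wv j = wv i + 1) :=
    Finset.eq_of_subset_of_card_le hRsub h2.le
  have hLsub : Finset.univ.filter (fun j => j < i ∧ wv i = wv j + 1)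
      ⊆ Finset.univ.filter (fun j => j < i' ∧ wv i' = wv j + 1) := by
    intro j hj
    simp only [Finset.mem_filter, Finset.mem_univ, true_and] at hj ⊢
    exact ⟨lt_of_lt_of_le hj.1 hle, by rw [← h1]; exact hj.2⟩
  have hLe : Finset.univ.filter (fun j => j < i ∧ wv i = wv j + 1)
      = Finset.univ.filter (fun j => j < i' ∧ wv i' = wv j + 1) :=
    Finset.eq_of_subset_of_card_le hLsub h3.ge
  have hRiff : ∀ j, (i < j ∧ wv j = wv i + 1) ↔ (i' < j ∧ wv j = wv i' + 1) := by
    intro j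
    have := Finset.ext_iff.mp hR j
    simp only [Finset.mem_filter, Finset.mem_univ, true_and] at this
    exact this.symm
  have hLiff : ∀ j, (j < i ∧ wv i = wv j + 1) ↔ (j < i' ∧ wv i' = wv j + 1) := by
    intro j
    have := Finset.ext_iff.mp hLe j
    simp only [Finset.mem_filter, Finset.mem_univ, true_and] at this
    exact this
  ext x
  simp only [SimpleGraph.mem_neighborSet]
  have e1 := adjChar i (v.symm x)
  have e2 := adjChar i' (v.symm x)
  rw [v.apply_symm_apply] at e1 e2
  rw [e1, e2]
  exact or_congr (hRiff _) (hLiff _)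


/-- For all `k, t ≥ 1`, connected bipartite permutation graphs with no induced
`P_k` and no induced `Z_t` have bounded neighbourhood diversity. -/
theorem connected_Pk_Zt_free_nd_bounded (k : ℕ) (hk : 1 ≤ k) (t : ℕ) (ht : 1 ≤ t) :
    ∃ c : ℕ, ∀ (W : Type) [Fintype W] (G : SimpleGraph W), IsBPG G → G.Connected →
      ¬ IndSub (SimpleGraph.pathGraph k) G → ¬ IndSub (Zgraph t) G → nd G ≤ c := by
  classical
  refine ⟨k * (t * t), ?_⟩
  intro W _ G hBPG hconn hPk hZt
  obtain ⟨K, v, w, hw⟩ := hBPG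
  set wv : Fin (Fintype.card W) → ℕ := fun i => (w i : ℕ) with hwv
  have adjChar : ∀ i j, G.Adj (v i) (v j) ↔
      ((i < j ∧ wv j = wv i + 1) ∨ (j < i ∧ wv i = wv j + 1)) := by
    intro i j
    rcases lt_trichotomy i j with h | h | h
    · rw [hw i j h]
      constructor
      · intro h2; exact Or.inl ⟨h, h2⟩
      · rintro (⟨-, h2⟩ | ⟨h1, -⟩)
        · exact h2
        · exact absurd h (lt_asymm h1)
    · subst h
      constructor
      · intro h2; exact absurd h2 (G.irrefl)
      · rintro (⟨h1, -⟩ | ⟨h1, -⟩) <;> exact absurd h1 (lt_irrefl i)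
    · rw [G.adj_comm, hw j i h]
      constructor
      · intro h2; exact Or.inr ⟨h, h2⟩
      · rintro (⟨h1, -⟩ | ⟨-, h2⟩)
        · exact absurd h (lt_asymm h1)
        · exact h2
  -- distance forces a small letter window
  have hdist : ∀ x y : W, G.dist x y + 1 < k := by
    intro x y
    by_contra h
    push_neg at h
    exact hPk (indsub_path_of_dist hconn k h)
  have adjStep : ∀ x y : W, G.Adj x y →
      (wv (v.symm y) = wv (v.symm x) + 1 ∨ wv (v.symm x) = wv (v.symm y) + 1) := by
    intro x y hxy
    have h2 : G.Adj (v (v.symm x)) (v (v.symm y)) := by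
      rw [v.apply_symm_apply, v.apply_symm_apply]; exact hxy
    rw [adjChar] at h2
    rcases h2 with ⟨-, h⟩ | ⟨-, h⟩
    · exact Or.inl h
    · exact Or.inr h
  have walkBound : ∀ (x y : W) (p : G.Walk x y),
      wv (v.symm y) ≤ wv (v.symm x) + p.length ∧ wv (v.symm x) ≤ wv (v.symm y) + p.length := by
    intro x y p
    induction p with
    | nil => simp
    | @cons u b y2 h q ih =>
      have hstep := adjStep u b h
      rw [SimpleGraph.Walk.length_cons]
      omega
  have hwin : ∀ i j : Fin (Fintype.card W), wv j + 1 < wv i + k := by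
    intro i j
    obtain ⟨p, hp⟩ := hconn.exists_walk_length_eq_dist (v i) (v j)
    have hb := (walkBound _ _ p).1
    rw [hp, v.symm_apply_apply, v.symm_apply_apply] at hb
    have := hdist (v i) (v j)
    omega
  -- the triple determining neighbourhoods
  set T : Fin (Fintype.card W) → ℕ × ℕ × ℕ := fun i =>
    (wv i, (Finset.univ.filter (fun j => i < j ∧ wv j = wv i + 1)).card,
      (Finset.univ.filter (fun j => j < i ∧ wv i = wv j + 1)).card) with hT
  have hdet : ∀ x y : W, T (v.symm x) = T (v.symm y) →
      G.neighborSet x = G.neighborSet y := by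
    intro x y hxy
    rw [hT] at hxy
    simp only [Prod.mk.injEq] at hxy
    obtain ⟨h1, h2, h3⟩ := hxy
    rcases le_total (v.symm x) (v.symm y) with hle | hle
    · have := nbhd_eq_of_counts v wv adjChar _ _ hle h1 h2 h3
      rwa [v.apply_symm_apply, v.apply_symm_apply] at this
    · have := nbhd_eq_of_counts v wv adjChar _ _ hle h1.symm h2.symm h3.symm
      rw [v.apply_symm_apply, v.apply_symm_apply] at this
      exact this.symm
  have hnd : nd G ≤ (Set.range (fun x : W => T (v.symm x))).ncard :=
    nd_le_range G _ hdet
  have hrange : (Set.range (fun x : W => T (v.symm x))) = ↑(Finset.univ.image T) := by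
    ext tr
    simp only [Set.mem_range, Finset.coe_image, Set.mem_image, Finset.mem_coe,
      Finset.mem_univ, Finset.coe_univ, Set.mem_univ, true_and]
    constructor
    · rintro ⟨x, hx⟩; exact ⟨v.symm x, hx⟩
    · rintro ⟨i, hi⟩; exact ⟨v i, by rw [v.symm_apply_apply]; exact hi⟩
  rw [hrange, Set.ncard_coe_finset] at hnd
  -- counting distinct triples
  have hper : ∀ a : ℕ, ((Finset.univ.filter (fun i => wv i = a)).image T).card ≤ t * t := by
    intro a
    have hmaps : ∀ tr ∈ (Finset.univ.filter (fun i => wv i = a)).image T,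
        (tr.2.1, tr.2.2) ∈
          ((Finset.univ.filter (fun i => wv i = a)).image
            (fun i => (Finset.univ.filter (fun j => i < j ∧ wv j = a + 1)).card)) ×ˢ
          ((Finset.univ.filter (fun i => wv i = a)).image
            (fun i => (Finset.univ.filter (fun j => j < i ∧ a = wv j + 1)).card)) := by
      intro tr htr
      rw [Finset.mem_image] at htr
      obtain ⟨i, hi, rfl⟩ := htr
      have hwa : wv i = a := by
        simpa [Finset.mem_filter] using hi
      rw [Finset.mem_product]
      constructor
      · rw [Finset.mem_image]
        refine ⟨i, hi, ?_⟩
        rw [hT]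
        dsimp only
        rw [hwa]
      · rw [Finset.mem_image]
        refine ⟨i, hi, ?_⟩
        rw [hT]
        dsimp only
        rw [hwa]
    have hinj : Set.InjOn (fun tr : ℕ × ℕ × ℕ => (tr.2.1, tr.2.2))
        ↑((Finset.univ.filter (fun i => wv i = a)).image T) := by
      intro tr htr tr' htr' hEq
      simp only [Finset.coe_image, Set.mem_image, Finset.mem_coe, Finset.mem_filter,
        Finset.mem_univ, true_and] at htr htr'
      obtain ⟨i, hi, rfl⟩ := htr
      obtain ⟨i', hi', rfl⟩ := htr'
      simp only [Prod.mk.injEq] at hEq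
      rw [hT]
      simp only [Prod.mk.injEq]
      exact ⟨by rw [hi, hi'], hEq.1, hEq.2⟩
    calc ((Finset.univ.filter (fun i => wv i = a)).image T).card
        ≤ _ := Finset.card_le_card_of_injOn _ hmaps hinj
      _ = _ * _ := Finset.card_product _ _
      _ ≤ t * t := Nat.mul_le_mul (zfree_R v wv adjChar t hZt a) (zfree_L v wv adjChar t hZt a)
  have hbiUnion : Finset.univ.image T ⊆
      (Finset.univ.image wv).biUnion (fun a => (Finset.univ.filter (fun i => wv i = a)).image T) := by
    intro tr htr
    rw [Finset.mem_image] at htr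
    obtain ⟨i, -, rfl⟩ := htr
    rw [Finset.mem_biUnion]
    exact ⟨wv i, Finset.mem_image_of_mem _ (Finset.mem_univ i),
      Finset.mem_image_of_mem _ (by simp [Finset.mem_filter])⟩
  have hcard1 : (Finset.univ.image T).card ≤ (Finset.univ.image wv).card * (t * t) := by
    calc (Finset.univ.image T).card
        ≤ ((Finset.univ.image wv).biUnion
            (fun a => (Finset.univ.filter (fun i => wv i = a)).image T)).card :=
          Finset.card_le_card hbiUnion
      _ ≤ ∑ a ∈ Finset.univ.image wv,
            ((Finset.univ.filter (fun i => wv i = a)).image T).card :=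
          Finset.card_biUnion_le
      _ ≤ ∑ _a ∈ Finset.univ.image wv, t * t := Finset.sum_le_sum (fun a _ => hper a)
      _ = (Finset.univ.image wv).card * (t * t) := by rw [Finset.sum_const, smul_eq_mul]
  have hLk : (Finset.univ.image wv).card ≤ k := by
    rcases (Finset.univ.image wv).eq_empty_or_nonempty with h | h
    · rw [h]; simp
    · obtain ⟨i0, -, hi0⟩ := Finset.mem_image.mp ((Finset.univ.image wv).min'_mem h)
      have hsub : Finset.univ.image wv ⊆
          Finset.Icc ((Finset.univ.image wv).min' h)
            ((Finset.univ.image wv).min' h + (k - 1)) := by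
        intro a haL
        rw [Finset.mem_Icc]
        refine ⟨Finset.min'_le _ a haL, ?_⟩
        obtain ⟨j0, -, hj0⟩ := Finset.mem_image.mp haL
        have := hwin i0 j0
        rw [hi0, hj0] at this
        omega
      calc (Finset.univ.image wv).card
          ≤ (Finset.Icc ((Finset.univ.image wv).min' h)
              ((Finset.univ.image wv).min' h + (k - 1))).card :=
            Finset.card_le_card hsub
        _ = k := by rw [Nat.card_Icc]; omega
  calc nd G ≤ (Finset.univ.image T).card := hnd
    _ ≤ (Finset.univ.image wv).card * (t * t) := hcard1
    _ ≤ k * (t * t) := Nat.mul_le_mul_right _ hLk
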